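/- Let A, C ∈ U(n) ⊂ Sp(2n,ℝ) and B ∈ Sp(2n,ℝ) satisfy A = B⁻¹ C B. Then A = r(B)⁻¹ C r(B), where r(B) = B(BᵀB)^{-1/2}. -/

import Mathlib

open Matrix

/-- The retraction `r(B) = B * (BᵀB)^{-1/2}` from `Sp(2n,ℝ)` to `U(n)`. -/
noncomputable def symplecticRetract {l : Type*} [DecidableEq l] [Fintype l]
    (B : Matrix (l ⊕ l) (l ⊕ l) ℝ) : Matrix (l ⊕ l) (l ⊕ l) ℝ :=
  B * ((((Matrix.posSemidef_conjTranspose_mul_self B).1.eigenvectorUnitary : Matrix (l ⊕ l) (l ⊕ l) ℝ) *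
    diagonal ((↑) ∘ (√·) ∘ (Matrix.posSemidef_conjTranspose_mul_self B).1.eigenvalues) *
    (star ((Matrix.posSemidef_conjTranspose_mul_self B).1.eigenvectorUnitary : Matrix (l ⊕ l) (l ⊕ l) ℝ))))⁻¹

/-- If `A, C ∈ U(n) = Sp(2n,ℝ) ∩ O(2n)` and `B ∈ Sp(2n,ℝ)` satisfy `A = B⁻¹ C B`, then
`A = r(B)⁻¹ C r(B)` where `r(B) = B (BᵀB)^{-1/2}`. -/
theorem retract_conjugation {l : Type*} [DecidableEq l] [Fintype l]
    (A B C : Matrix (l ⊕ l) (l ⊕ l) ℝ)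
    (hA : A ∈ Matrix.symplecticGroup l ℝ) (hAo : Aᵀ * A = 1)
    (hC : C ∈ Matrix.symplecticGroup l ℝ) (hCo : Cᵀ * C = 1)
    (hB : B ∈ Matrix.symplecticGroup l ℝ)
    (h : A = B⁻¹ * C * B) :
    A = (symplecticRetract B)⁻¹ * C * symplecticRetract B := by
  have hBdet : IsUnit B.det := SymplecticGroup.symplectic_det hB
  have hBinv : B⁻¹ * B = 1 := Matrix.nonsing_inv_mul B hBdet
  have hBinv' : B * B⁻¹ = 1 := Matrix.mul_nonsing_inv B hBdet
  set hM := Matrix.posSemidef_conjTranspose_mul_self B with hMdef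
  set S := (((hM.1.eigenvectorUnitary : Matrix (l ⊕ l) (l ⊕ l) ℝ) *
    diagonal ((↑) ∘ (√·) ∘ hM.1.eigenvalues) *
    (star (hM.1.eigenvectorUnitary : Matrix (l ⊕ l) (l ⊕ l) ℝ)))) with hSdef
  open scoped MatrixOrder in
  have hSsqrt : S = CFC.sqrt (Bᴴ * B) := by
    rw [CFC.sqrt_eq_real_sqrt _ hM.nonneg, cfcₙ_eq_cfc, hM.1.cfc_eq, Matrix.IsHermitian.cfc,
      Unitary.conjStarAlgAut_apply]
    rfl
  have hMeq : Bᴴ * B = Bᵀ * B := by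
    rw [Matrix.conjTranspose_eq_transpose_of_trivial]
  -- BA = CB
  have hBA : B * A = C * B := by
    rw [h, ← Matrix.mul_assoc, ← Matrix.mul_assoc, hBinv', Matrix.one_mul]
  -- Aᵀ (BᵀB) A = BᵀB
  have hconj : Aᵀ * (Bᴴ * B) * A = Bᴴ * B := by
    rw [hMeq]
    calc Aᵀ * (Bᵀ * B) * A = (B * A)ᵀ * (B * A) := by
          rw [Matrix.transpose_mul]; noncomm_ring
      _ = (C * B)ᵀ * (C * B) := by rw [hBA]
      _ = Bᵀ * (Cᵀ * C) * B := by rw [Matrix.transpose_mul]; noncomm_ring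
      _ = Bᵀ * B := by rw [hCo, Matrix.mul_one]
  -- A A^T = 1
  have hAo' : A * Aᵀ = 1 := mul_eq_one_comm.mp hAo
  -- Aᵀ S A is a psd square root of BᴴB
  open scoped MatrixOrder in
  have hSpsd : S.PosSemidef := hSsqrt ▸ (CFC.sqrt_nonneg (Bᴴ * B)).posSemidef
  have hASA : Matrix.PosSemidef (Aᵀ * S * A) := by
    have := hSpsd.mul_mul_conjTranspose_same Aᵀ
    simpa [Matrix.conjTranspose_eq_transpose_of_trivial, Matrix.mul_assoc] using this
  have hsq : (Aᵀ * S * A) ^ 2 = Bᴴ * B := by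
    open scoped MatrixOrder in
    have hS2 : S * S = Bᴴ * B := hSsqrt ▸ CFC.sqrt_mul_sqrt_self _ hM.nonneg
    calc (Aᵀ * S * A) ^ 2 = Aᵀ * S * (A * Aᵀ) * S * A := by noncomm_ring
      _ = Aᵀ * (S * S) * A := by rw [hAo']; noncomm_ring
      _ = Bᴴ * B := by rw [hS2, hconj]
  open scoped MatrixOrder in
  have hkey : Aᵀ * S * A = S :=
    hSsqrt ▸ (CFC.sqrt_unique (b := Aᵀ * S * A) (by rw [← sq]; exact hsq) hASA.nonneg).symm
  -- hence S commutes with A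
  have hcomm : A * S = S * A := by
    calc A * S = A * (Aᵀ * S * A) * Aᵀ * A := by rw [hkey]; noncomm_ring [hAo]
      _ = (A * Aᵀ) * S * (A * Aᵀ) * A := by noncomm_ring
      _ = S * A := by rw [hAo']; noncomm_ring
  -- S is invertible
  have hSdet : IsUnit S.det := by
    have : S.det * S.det = (Bᴴ * B).det := by
      rw [← Matrix.det_mul, hSsqrt, CFC.sqrt_mul_sqrt_self _ hM.nonneg]
    have hMdet : IsUnit (Bᴴ * B).det := by
      rw [hMeq, Matrix.det_mul, Matrix.det_transpose]
      exact hBdet.mul hBdet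
    exact isUnit_of_mul_isUnit_left (this ▸ hMdet)
  have hSS : S * S⁻¹ = 1 := Matrix.mul_nonsing_inv S hSdet
  have hSS' : S⁻¹ * S = 1 := Matrix.nonsing_inv_mul S hSdet
  -- compute
  rw [symplecticRetract, Matrix.mul_inv_rev, Matrix.nonsing_inv_nonsing_inv S hSdet]
  rw [show S * B⁻¹ * C * (B * S⁻¹) = S * (B⁻¹ * C * B) * S⁻¹ by noncomm_ring]
  rw [← h]
  rw [← hcomm, Matrix.mul_assoc, hSS, Matrix.mul_one]
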